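/- In any weak post-Hopf algebroid (H, ι, ▷) over R, the Grossman–Larson product x *_▷ y := x₁(x₂ ▷ y) is a well-defined binary operation on H that is associative with unit 1_H, and ι is an algebra homomorphism from R to (H, *_▷) satisfying ι(f) *_▷ x = f·x for all f ∈ R, x ∈ H. -/

import Mathlib

/-!
STATEMENT 2: In any weak post-Hopf algebroid `(H, ι, ▷)` over `R`, for all `f ∈ R` and
`x ∈ H` one has `x ▷ ι(f) = ι(ε(x ▷ ι(f)))` and `ι(f) ▷ x = f·x`.

A cocommutative Hopf `R`-algebra is encoded via Mathlib's `HopfAlgebra R H` (so `ι` is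
`algebraMap R H`, whose image is central) together with a cocommutativity axiom.  The
comultiplication is handled through a chosen Sweedler representation `comul x = ∑ c1 x i ⊗ c2 x i`.
-/

open scoped TensorProduct

/-- A weak post-Hopf algebroid over `R`: a cocommutative Hopf `R`-algebra `(H, ι)` together
with a `k`-bilinear map `▷ : H × H → H` satisfying axioms (1)–(7). -/
structure WeakPostHopfAlgebroid (k R H : Type*) [Field k] [CharZero k]
    [CommRing R] [Algebra k R] [Ring H] [HopfAlgebra R H]
    [Algebra k H] [IsScalarTower k R H] where
  /-- the post-Hopf product `▷` -/
  tr : H → H → H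
  /-- size of the chosen Sweedler representation of `comul x` -/
  n : H → ℕ
  /-- first Sweedler components -/
  c1 : H → ℕ → H
  /-- second Sweedler components -/
  c2 : H → ℕ → H
  repr : ∀ x : H, Coalgebra.comul (R := R) x
      = ∑ i ∈ Finset.range (n x), c1 x i ⊗ₜ[R] c2 x i
  cocomm : ∀ x : H, (TensorProduct.comm R H H) (Coalgebra.comul (R := R) x)
      = Coalgebra.comul (R := R) x
  tr_add_left : ∀ x y z : H, tr (x + y) z = tr x z + tr y z
  tr_add_right : ∀ x y z : H, tr x (y + z) = tr x y + tr x z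
  tr_smul_right : ∀ (a : k) (x y : H), tr x (a • y) = a • tr x y
  /-- axiom (1): `Δ(x ▷ y) = (x₁ ▷ y₁) ⊗ (x₂ ▷ y₂)` -/
  comul_tr : ∀ x y : H, Coalgebra.comul (R := R) (tr x y)
      = ∑ i ∈ Finset.range (n x), ∑ j ∈ Finset.range (n y),
          tr (c1 x i) (c1 y j) ⊗ₜ[R] tr (c2 x i) (c2 y j)
  /-- axiom (2): `x ▷ 1 = ι(ε(x))` -/
  tr_one : ∀ x : H, tr x 1 = algebraMap R H (Coalgebra.counit (R := R) x)
  /-- axiom (3): `1 ▷ x = x` -/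
  one_tr : ∀ x : H, tr 1 x = x
  /-- axiom (4): `ι(ε(x ▷ y)) = x ▷ ι(ε(y))` -/
  counit_tr : ∀ x y : H, algebraMap R H (Coalgebra.counit (R := R) (tr x y))
      = tr x (algebraMap R H (Coalgebra.counit (R := R) y))
  /-- axiom (5): `(f·x) ▷ y = f·(x ▷ y)` -/
  tr_smul_left : ∀ (f : R) (x y : H), tr (f • x) y = f • tr x y
  /-- axiom (6): `x ▷ (yz) = (x₁ ▷ y)(x₂ ▷ z)` -/
  tr_mul : ∀ x y z : H, tr x (y * z)
      = ∑ i ∈ Finset.range (n x), tr (c1 x i) y * tr (c2 x i) z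
  /-- axiom (7): `x ▷ (y ▷ z) = (x₁(x₂ ▷ y)) ▷ z` -/
  tr_tr : ∀ x y z : H, tr x (tr y z)
      = tr (∑ i ∈ Finset.range (n x), c1 x i * tr (c2 x i) y) z

/-- The Grossman–Larson product `x *_▷ y := x₁(x₂ ▷ y)` (computed with the chosen
Sweedler representation). -/
def WeakPostHopfAlgebroid.gl {k R H : Type*} [Field k] [CharZero k]
    [CommRing R] [Algebra k R] [Ring H] [HopfAlgebra R H]
    [Algebra k H] [IsScalarTower k R H]
    (W : WeakPostHopfAlgebroid k R H) (x y : H) : H :=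
  ∑ i ∈ Finset.range (W.n x), W.c1 x i * W.tr (W.c2 x i) y

namespace WeakPostHopfAlgebroid

open Finset TensorProduct LinearMap

variable {k R H : Type*} [Field k] [CharZero k]
    [CommRing R] [Algebra k R] [Ring H] [HopfAlgebra R H]
    [Algebra k H] [IsScalarTower k R H]
    (W : WeakPostHopfAlgebroid k R H)

lemma tr_zero_left (y : H) : W.tr 0 y = 0 := by
  have h := W.tr_add_left 0 0 y
  rw [add_zero] at h
  exact (left_eq_add.mp h)

lemma tr_zero_right (x : H) : W.tr x 0 = 0 := by
  have h := W.tr_add_right x 0 0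
  rw [add_zero] at h
  exact (left_eq_add.mp h)

lemma tr_sum_right {ι : Type*} (x : H) (s : Finset ι) (g : ι → H) :
    W.tr x (∑ i ∈ s, g i) = ∑ i ∈ s, W.tr x (g i) := by
  classical
  induction s using Finset.induction_on with
  | empty => simpa using W.tr_zero_right x
  | insert _ _ hi ih => rw [Finset.sum_insert hi, Finset.sum_insert hi, W.tr_add_right, ih]

lemma tr_sum_left {ι : Type*} (s : Finset ι) (g : ι → H) (y : H) :
    W.tr (∑ i ∈ s, g i) y = ∑ i ∈ s, W.tr (g i) y := by
  classical
  induction s using Finset.induction_on with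
  | empty => simpa using W.tr_zero_left y
  | insert _ _ hi ih => rw [Finset.sum_insert hi, Finset.sum_insert hi, W.tr_add_left, ih]

/-- `a ⊗ b ↦ a * (b ▷ y)` as an `R`-linear map. -/
noncomputable def glmap (y : H) : H ⊗[R] H →ₗ[R] H :=
  TensorProduct.lift (LinearMap.mk₂ R (fun a b => a * W.tr b y)
    (fun a a' b => by rw [add_mul])
    (fun f a b => by rw [smul_mul_assoc])
    (fun a b b' => by rw [W.tr_add_left, mul_add])
    (fun f a b => by rw [W.tr_smul_left, mul_smul_comm]))

@[simp] lemma glmap_tmul (y a b : H) : W.glmap y (a ⊗ₜ[R] b) = a * W.tr b y := rfl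

lemma gl_eq_glmap (x y : H) : W.gl x y = W.glmap y (Coalgebra.comul (R := R) x) := by
  rw [W.repr x, map_sum]
  rfl

lemma gl_welldef (x y : H) (m : ℕ) (a b : ℕ → H)
    (h : Coalgebra.comul (R := R) x = ∑ i ∈ Finset.range m, a i ⊗ₜ[R] b i) :
    ∑ i ∈ Finset.range m, a i * W.tr (b i) y = W.gl x y := by
  rw [W.gl_eq_glmap, h, map_sum]
  rfl

lemma comm_rep (w : H) :
    ∑ q ∈ Finset.range (W.n w), W.c2 w q ⊗ₜ[R] W.c1 w q = Coalgebra.comul (R := R) w := by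
  have h := W.cocomm w
  calc ∑ q ∈ Finset.range (W.n w), W.c2 w q ⊗ₜ[R] W.c1 w q
      = (TensorProduct.comm R H H) (Coalgebra.comul (R := R) w) := by
        rw [W.repr w, map_sum]
        simp [TensorProduct.comm_tmul]
    _ = Coalgebra.comul (R := R) w := h

lemma coassoc_rep (w : H) :
    ∑ q ∈ Finset.range (W.n w), ∑ t ∈ Finset.range (W.n (W.c1 w q)),
      W.c1 (W.c1 w q) t ⊗ₜ[R] (W.c2 (W.c1 w q) t ⊗ₜ[R] W.c2 w q)
    = ∑ q ∈ Finset.range (W.n w), ∑ s ∈ Finset.range (W.n (W.c2 w q)),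
      W.c1 w q ⊗ₜ[R] (W.c1 (W.c2 w q) s ⊗ₜ[R] W.c2 (W.c2 w q) s) := by
  have h := Coalgebra.coassoc_apply (R := R) w
  have hL : (TensorProduct.assoc R H H H)
      ((Coalgebra.comul (R := R)).rTensor H (Coalgebra.comul (R := R) w))
      = ∑ q ∈ Finset.range (W.n w), ∑ t ∈ Finset.range (W.n (W.c1 w q)),
        W.c1 (W.c1 w q) t ⊗ₜ[R] (W.c2 (W.c1 w q) t ⊗ₜ[R] W.c2 w q) := by
    rw [W.repr w, map_sum, map_sum]
    refine Finset.sum_congr rfl fun q _ => ?_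
    rw [LinearMap.rTensor_tmul, W.repr (W.c1 w q), TensorProduct.sum_tmul, map_sum]
    exact Finset.sum_congr rfl fun t _ => by rw [TensorProduct.assoc_tmul]
  have hR : (Coalgebra.comul (R := R)).lTensor H (Coalgebra.comul (R := R) w)
      = ∑ q ∈ Finset.range (W.n w), ∑ s ∈ Finset.range (W.n (W.c2 w q)),
        W.c1 w q ⊗ₜ[R] (W.c1 (W.c2 w q) s ⊗ₜ[R] W.c2 (W.c2 w q) s) := by
    rw [W.repr w, map_sum]
    refine Finset.sum_congr rfl fun q _ => ?_
    rw [LinearMap.lTensor_tmul, W.repr (W.c2 w q), TensorProduct.tmul_sum]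
  rw [hL, hR] at h
  exact h

/-- `α ⊗ β ↦ α ⊗ (β ⊗ d)` as an `R`-linear map. -/
noncomputable def jmap (R H : Type*) [CommRing R] [Ring H] [Algebra R H] (d : H) :
    H ⊗[R] H →ₗ[R] H ⊗[R] (H ⊗[R] H) :=
  TensorProduct.lift (LinearMap.mk₂ R (fun α β => α ⊗ₜ[R] (β ⊗ₜ[R] d))
    (fun α α' β => by rw [add_tmul])
    (fun f α β => by rw [smul_tmul'])
    (fun α β β' => by rw [add_tmul, tmul_add])
    (fun f α β => by rw [← smul_tmul', tmul_smul]))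

lemma swap_rep (w d : H) :
    ∑ t ∈ Finset.range (W.n w), W.c2 w t ⊗ₜ[R] (W.c1 w t ⊗ₜ[R] d)
    = ∑ t ∈ Finset.range (W.n w), W.c1 w t ⊗ₜ[R] (W.c2 w t ⊗ₜ[R] d) := by
  have h1 : ∑ t ∈ Finset.range (W.n w), W.c2 w t ⊗ₜ[R] (W.c1 w t ⊗ₜ[R] d)
      = jmap R H d (∑ q ∈ Finset.range (W.n w), W.c2 w q ⊗ₜ[R] W.c1 w q) := by
    rw [map_sum]; rfl
  have h2 : jmap R H d (Coalgebra.comul (R := R) w)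
      = ∑ t ∈ Finset.range (W.n w), W.c1 w t ⊗ₜ[R] (W.c2 w t ⊗ₜ[R] d) := by
    rw [W.repr w, map_sum]; rfl
  rw [h1, W.comm_rep w, h2]

section Assoc

variable {k R H : Type*} [Field k] [CharZero k]
    [CommRing R] [Algebra k R] [Ring H] [HopfAlgebra R H]
    [Algebra k H] [IsScalarTower k R H]
    (W : WeakPostHopfAlgebroid k R H)

/-- `γ ⊗ d ↦ ((γ * (d ▷ v)) ▷ z)` as an `R`-linear map. -/
noncomputable def p3 (v z : H) : H ⊗[R] H →ₗ[R] H :=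
  TensorProduct.lift (LinearMap.mk₂ R (fun γ d => W.tr (γ * W.tr d v) z)
    (fun γ γ' d => by rw [add_mul, W.tr_add_left])
    (fun f γ d => by rw [smul_mul_assoc, W.tr_smul_left])
    (fun γ d d' => by rw [W.tr_add_left, mul_add, W.tr_add_left])
    (fun f γ d => by rw [W.tr_smul_left, mul_smul_comm, W.tr_smul_left]))

@[simp] lemma p3_tmul (v z γ d : H) : W.p3 v z (γ ⊗ₜ[R] d) = W.tr (γ * W.tr d v) z := rfl

noncomputable def p2 (u v z : H) : H ⊗[R] (H ⊗[R] H) →ₗ[R] H :=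
  TensorProduct.lift (LinearMap.mk₂ R (fun β s => W.tr β u * W.p3 v z s)
    (fun β β' s => by rw [W.tr_add_left, add_mul])
    (fun f β s => by rw [W.tr_smul_left, smul_mul_assoc])
    (fun β s s' => by rw [map_add, mul_add])
    (fun f β s => by rw [map_smul, mul_smul_comm]))

@[simp] lemma p2_tmul (u v z β : H) (s : H ⊗[R] H) :
    W.p2 u v z (β ⊗ₜ[R] s) = W.tr β u * W.p3 v z s := rfl

noncomputable def phi (u v z : H) : H ⊗[R] (H ⊗[R] (H ⊗[R] H)) →ₗ[R] H :=
  TensorProduct.lift (LinearMap.mk₂ R (fun α t => α * W.p2 u v z t)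
    (fun α α' t => by rw [add_mul])
    (fun f α t => by rw [smul_mul_assoc])
    (fun α t t' => by rw [map_add, mul_add])
    (fun f α t => by rw [map_smul, mul_smul_comm]))

@[simp] lemma phi_tmul (u v z α β γ d : H) :
    W.phi u v z (α ⊗ₜ[R] (β ⊗ₜ[R] (γ ⊗ₜ[R] d)))
      = α * (W.tr β u * W.tr (γ * W.tr d v) z) := rfl

/-- The key 4-tensor identity, combining coassociativity and cocommutativity. -/
lemma key_tensor (x : H) :
    ∑ i ∈ Finset.range (W.n x), ∑ q ∈ Finset.range (W.n (W.c1 x i)),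
      ∑ p ∈ Finset.range (W.n (W.c2 x i)),
        W.c1 (W.c1 x i) q ⊗ₜ[R] (W.c1 (W.c2 x i) p ⊗ₜ[R]
          (W.c2 (W.c1 x i) q ⊗ₜ[R] W.c2 (W.c2 x i) p))
    = ∑ i ∈ Finset.range (W.n x), ∑ p ∈ Finset.range (W.n (W.c2 x i)),
        ∑ s ∈ Finset.range (W.n (W.c2 (W.c2 x i) p)),
          W.c1 x i ⊗ₜ[R] (W.c1 (W.c2 x i) p ⊗ₜ[R]
            (W.c1 (W.c2 (W.c2 x i) p) s ⊗ₜ[R] W.c2 (W.c2 (W.c2 x i) p) s)) := by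
  set L3 : H ⊗[R] (H ⊗[R] H) →ₗ[R] H ⊗[R] (H ⊗[R] (H ⊗[R] H)) :=
    LinearMap.lTensor H (LinearMap.lTensor H (Coalgebra.comul (R := R))) with hL3
  set σ : H ⊗[R] (H ⊗[R] (H ⊗[R] H)) →ₗ[R] H ⊗[R] (H ⊗[R] (H ⊗[R] H)) :=
    LinearMap.lTensor H ((TensorProduct.leftComm R H H H).toLinearMap) with hσ
  -- T1 := (Δ ⊗ Δ)Δx  (expanded leg 3 of (Δ⊗1)Δ)
  have h1 : L3 (∑ i ∈ Finset.range (W.n x), ∑ q ∈ Finset.range (W.n (W.c1 x i)),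
        W.c1 (W.c1 x i) q ⊗ₜ[R] (W.c2 (W.c1 x i) q ⊗ₜ[R] W.c2 x i))
      = ∑ i ∈ Finset.range (W.n x), ∑ q ∈ Finset.range (W.n (W.c1 x i)),
          ∑ p ∈ Finset.range (W.n (W.c2 x i)),
          W.c1 (W.c1 x i) q ⊗ₜ[R] (W.c2 (W.c1 x i) q ⊗ₜ[R]
            (W.c1 (W.c2 x i) p ⊗ₜ[R] W.c2 (W.c2 x i) p)) := by
    rw [map_sum]
    refine Finset.sum_congr rfl fun i _ => ?_
    rw [map_sum]
    refine Finset.sum_congr rfl fun q _ => ?_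
    rw [hL3, LinearMap.lTensor_tmul, LinearMap.lTensor_tmul, W.repr (W.c2 x i),
      TensorProduct.tmul_sum, TensorProduct.tmul_sum]
  have h2 : L3 (∑ i ∈ Finset.range (W.n x), ∑ p ∈ Finset.range (W.n (W.c2 x i)),
        W.c1 x i ⊗ₜ[R] (W.c1 (W.c2 x i) p ⊗ₜ[R] W.c2 (W.c2 x i) p))
      = ∑ i ∈ Finset.range (W.n x), ∑ p ∈ Finset.range (W.n (W.c2 x i)),
          ∑ s ∈ Finset.range (W.n (W.c2 (W.c2 x i) p)),
          W.c1 x i ⊗ₜ[R] (W.c1 (W.c2 x i) p ⊗ₜ[R]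
            (W.c1 (W.c2 (W.c2 x i) p) s ⊗ₜ[R] W.c2 (W.c2 (W.c2 x i) p) s)) := by
    rw [map_sum]
    refine Finset.sum_congr rfl fun i _ => ?_
    rw [map_sum]
    refine Finset.sum_congr rfl fun p _ => ?_
    rw [hL3, LinearMap.lTensor_tmul, LinearMap.lTensor_tmul, W.repr (W.c2 (W.c2 x i) p),
      TensorProduct.tmul_sum, TensorProduct.tmul_sum]
  -- T0 = T1 via coassociativity of x
  have hT10 : ∑ i ∈ Finset.range (W.n x), ∑ q ∈ Finset.range (W.n (W.c1 x i)),
        ∑ p ∈ Finset.range (W.n (W.c2 x i)),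
        W.c1 (W.c1 x i) q ⊗ₜ[R] (W.c2 (W.c1 x i) q ⊗ₜ[R]
          (W.c1 (W.c2 x i) p ⊗ₜ[R] W.c2 (W.c2 x i) p))
      = ∑ i ∈ Finset.range (W.n x), ∑ p ∈ Finset.range (W.n (W.c2 x i)),
          ∑ s ∈ Finset.range (W.n (W.c2 (W.c2 x i) p)),
          W.c1 x i ⊗ₜ[R] (W.c1 (W.c2 x i) p ⊗ₜ[R]
            (W.c1 (W.c2 (W.c2 x i) p) s ⊗ₜ[R] W.c2 (W.c2 (W.c2 x i) p) s)) := by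
    rw [← h1, ← h2, W.coassoc_rep x]
  -- T0 = T2 via inner coassociativity of each `c2 x i`
  have hT02 : ∑ i ∈ Finset.range (W.n x), ∑ p ∈ Finset.range (W.n (W.c2 x i)),
        ∑ s ∈ Finset.range (W.n (W.c2 (W.c2 x i) p)),
        W.c1 x i ⊗ₜ[R] (W.c1 (W.c2 x i) p ⊗ₜ[R]
          (W.c1 (W.c2 (W.c2 x i) p) s ⊗ₜ[R] W.c2 (W.c2 (W.c2 x i) p) s))
      = ∑ i ∈ Finset.range (W.n x), ∑ p ∈ Finset.range (W.n (W.c2 x i)),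
          ∑ t ∈ Finset.range (W.n (W.c1 (W.c2 x i) p)),
          W.c1 x i ⊗ₜ[R] (W.c1 (W.c1 (W.c2 x i) p) t ⊗ₜ[R]
            (W.c2 (W.c1 (W.c2 x i) p) t ⊗ₜ[R] W.c2 (W.c2 x i) p)) := by
    refine Finset.sum_congr rfl fun i _ => ?_
    have h := congrArg (TensorProduct.mk R H (H ⊗[R] (H ⊗[R] H)) (W.c1 x i))
      (W.coassoc_rep (W.c2 x i)).symm
    simpa only [map_sum, TensorProduct.mk_apply] using h
  -- σ T2 = T2 via cocommutativity
  have hσT2 : σ (∑ i ∈ Finset.range (W.n x), ∑ p ∈ Finset.range (W.n (W.c2 x i)),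
        ∑ t ∈ Finset.range (W.n (W.c1 (W.c2 x i) p)),
        W.c1 x i ⊗ₜ[R] (W.c1 (W.c1 (W.c2 x i) p) t ⊗ₜ[R]
          (W.c2 (W.c1 (W.c2 x i) p) t ⊗ₜ[R] W.c2 (W.c2 x i) p)))
      = ∑ i ∈ Finset.range (W.n x), ∑ p ∈ Finset.range (W.n (W.c2 x i)),
          ∑ t ∈ Finset.range (W.n (W.c1 (W.c2 x i) p)),
          W.c1 x i ⊗ₜ[R] (W.c1 (W.c1 (W.c2 x i) p) t ⊗ₜ[R]
            (W.c2 (W.c1 (W.c2 x i) p) t ⊗ₜ[R] W.c2 (W.c2 x i) p)) := by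
    rw [map_sum]
    refine Finset.sum_congr rfl fun i _ => ?_
    rw [map_sum]
    refine Finset.sum_congr rfl fun p _ => ?_
    rw [map_sum]
    have : ∀ t, σ (W.c1 x i ⊗ₜ[R] (W.c1 (W.c1 (W.c2 x i) p) t ⊗ₜ[R]
          (W.c2 (W.c1 (W.c2 x i) p) t ⊗ₜ[R] W.c2 (W.c2 x i) p)))
        = W.c1 x i ⊗ₜ[R] (W.c2 (W.c1 (W.c2 x i) p) t ⊗ₜ[R]
          (W.c1 (W.c1 (W.c2 x i) p) t ⊗ₜ[R] W.c2 (W.c2 x i) p)) := fun t => by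
      rw [hσ, LinearMap.lTensor_tmul]
      simp [TensorProduct.leftComm_tmul]
    simp_rw [this]
    have h2 := congrArg (TensorProduct.mk R H (H ⊗[R] (H ⊗[R] H)) (W.c1 x i))
      (W.swap_rep (W.c1 (W.c2 x i) p) (W.c2 (W.c2 x i) p))
    simpa only [map_sum, TensorProduct.mk_apply] using h2
  -- σ T1 computes to the LHS
  have hσT1 : σ (∑ i ∈ Finset.range (W.n x), ∑ q ∈ Finset.range (W.n (W.c1 x i)),
        ∑ p ∈ Finset.range (W.n (W.c2 x i)),
        W.c1 (W.c1 x i) q ⊗ₜ[R] (W.c2 (W.c1 x i) q ⊗ₜ[R]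
          (W.c1 (W.c2 x i) p ⊗ₜ[R] W.c2 (W.c2 x i) p)))
      = ∑ i ∈ Finset.range (W.n x), ∑ q ∈ Finset.range (W.n (W.c1 x i)),
          ∑ p ∈ Finset.range (W.n (W.c2 x i)),
          W.c1 (W.c1 x i) q ⊗ₜ[R] (W.c1 (W.c2 x i) p ⊗ₜ[R]
            (W.c2 (W.c1 x i) q ⊗ₜ[R] W.c2 (W.c2 x i) p)) := by
    rw [map_sum]
    refine Finset.sum_congr rfl fun i _ => ?_
    rw [map_sum]
    refine Finset.sum_congr rfl fun q _ => ?_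
    rw [map_sum]
    refine Finset.sum_congr rfl fun p _ => ?_
    rw [hσ, LinearMap.lTensor_tmul]
    simp [TensorProduct.leftComm_tmul]
  calc ∑ i ∈ Finset.range (W.n x), ∑ q ∈ Finset.range (W.n (W.c1 x i)),
        ∑ p ∈ Finset.range (W.n (W.c2 x i)),
        W.c1 (W.c1 x i) q ⊗ₜ[R] (W.c1 (W.c2 x i) p ⊗ₜ[R]
          (W.c2 (W.c1 x i) q ⊗ₜ[R] W.c2 (W.c2 x i) p))
      = σ (∑ i ∈ Finset.range (W.n x), ∑ q ∈ Finset.range (W.n (W.c1 x i)),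
        ∑ p ∈ Finset.range (W.n (W.c2 x i)),
        W.c1 (W.c1 x i) q ⊗ₜ[R] (W.c2 (W.c1 x i) q ⊗ₜ[R]
          (W.c1 (W.c2 x i) p ⊗ₜ[R] W.c2 (W.c2 x i) p))) := hσT1.symm
    _ = σ (∑ i ∈ Finset.range (W.n x), ∑ p ∈ Finset.range (W.n (W.c2 x i)),
          ∑ t ∈ Finset.range (W.n (W.c1 (W.c2 x i) p)),
          W.c1 x i ⊗ₜ[R] (W.c1 (W.c1 (W.c2 x i) p) t ⊗ₜ[R]
            (W.c2 (W.c1 (W.c2 x i) p) t ⊗ₜ[R] W.c2 (W.c2 x i) p))) := by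
        rw [hT10, hT02]
    _ = ∑ i ∈ Finset.range (W.n x), ∑ p ∈ Finset.range (W.n (W.c2 x i)),
          ∑ t ∈ Finset.range (W.n (W.c1 (W.c2 x i) p)),
          W.c1 x i ⊗ₜ[R] (W.c1 (W.c1 (W.c2 x i) p) t ⊗ₜ[R]
            (W.c2 (W.c1 (W.c2 x i) p) t ⊗ₜ[R] W.c2 (W.c2 x i) p)) := hσT2
    _ = ∑ i ∈ Finset.range (W.n x), ∑ p ∈ Finset.range (W.n (W.c2 x i)),
          ∑ s ∈ Finset.range (W.n (W.c2 (W.c2 x i) p)),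
          W.c1 x i ⊗ₜ[R] (W.c1 (W.c2 x i) p ⊗ₜ[R]
            (W.c1 (W.c2 (W.c2 x i) p) s ⊗ₜ[R] W.c2 (W.c2 (W.c2 x i) p) s)) := hT02.symm

end Assoc
section Assoc2

variable {k R H : Type*} [Field k] [CharZero k]
    [CommRing R] [Algebra k R] [Ring H] [HopfAlgebra R H]
    [Algebra k H] [IsScalarTower k R H]
    (W : WeakPostHopfAlgebroid k R H)

private lemma sum_comm3 {M : Type*} [AddCommMonoid M] {s : Finset ℕ} {t : ℕ → Finset ℕ}
    {r : ℕ → ℕ → Finset ℕ} {u : Finset ℕ} (f : ℕ → ℕ → ℕ → ℕ → M) :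
    ∑ i ∈ s, ∑ q ∈ t i, ∑ p ∈ r i q, ∑ j ∈ u, f i q p j
      = ∑ j ∈ u, ∑ i ∈ s, ∑ q ∈ t i, ∑ p ∈ r i q, f i q p j := by
  calc ∑ i ∈ s, ∑ q ∈ t i, ∑ p ∈ r i q, ∑ j ∈ u, f i q p j
      = ∑ i ∈ s, ∑ q ∈ t i, ∑ j ∈ u, ∑ p ∈ r i q, f i q p j :=
        Finset.sum_congr rfl fun i _ => Finset.sum_congr rfl fun q _ => Finset.sum_comm
    _ = ∑ i ∈ s, ∑ j ∈ u, ∑ q ∈ t i, ∑ p ∈ r i q, f i q p j :=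
        Finset.sum_congr rfl fun i _ => Finset.sum_comm
    _ = ∑ j ∈ u, ∑ i ∈ s, ∑ q ∈ t i, ∑ p ∈ r i q, f i q p j := Finset.sum_comm

lemma gl_assoc (x y z : H) : W.gl (W.gl x y) z = W.gl x (W.gl y z) := by
  have hcm : Coalgebra.comul (R := R) (W.gl x y)
      = ∑ i ∈ Finset.range (W.n x), ∑ q ∈ Finset.range (W.n (W.c1 x i)),
          ∑ p ∈ Finset.range (W.n (W.c2 x i)), ∑ j ∈ Finset.range (W.n y),
          (W.c1 (W.c1 x i) q * W.tr (W.c1 (W.c2 x i) p) (W.c1 y j)) ⊗ₜ[R]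
            (W.c2 (W.c1 x i) q * W.tr (W.c2 (W.c2 x i) p) (W.c2 y j)) := by
    simp only [gl]
    rw [map_sum]
    refine Finset.sum_congr rfl fun i _ => ?_
    rw [Bialgebra.comul_mul, W.repr (W.c1 x i), W.comul_tr (W.c2 x i) y, Finset.sum_mul_sum]
    refine Finset.sum_congr rfl fun q _ => Finset.sum_congr rfl fun p _ => ?_
    rw [Finset.mul_sum]
    exact Finset.sum_congr rfl fun j _ => Algebra.TensorProduct.tmul_mul_tmul _ _ _ _
  have hL : W.gl (W.gl x y) z
      = ∑ i ∈ Finset.range (W.n x), ∑ q ∈ Finset.range (W.n (W.c1 x i)),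
          ∑ p ∈ Finset.range (W.n (W.c2 x i)), ∑ j ∈ Finset.range (W.n y),
          W.c1 (W.c1 x i) q * (W.tr (W.c1 (W.c2 x i) p) (W.c1 y j) *
            W.tr (W.c2 (W.c1 x i) q * W.tr (W.c2 (W.c2 x i) p) (W.c2 y j)) z) := by
    rw [W.gl_eq_glmap (W.gl x y) z, hcm]
    simp only [map_sum, glmap_tmul, mul_assoc]
  have hphiL : ∀ j : ℕ, W.phi (W.c1 y j) (W.c2 y j) z
      (∑ i ∈ Finset.range (W.n x), ∑ q ∈ Finset.range (W.n (W.c1 x i)),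
        ∑ p ∈ Finset.range (W.n (W.c2 x i)),
          W.c1 (W.c1 x i) q ⊗ₜ[R] (W.c1 (W.c2 x i) p ⊗ₜ[R]
            (W.c2 (W.c1 x i) q ⊗ₜ[R] W.c2 (W.c2 x i) p)))
      = ∑ i ∈ Finset.range (W.n x), ∑ q ∈ Finset.range (W.n (W.c1 x i)),
          ∑ p ∈ Finset.range (W.n (W.c2 x i)),
          W.c1 (W.c1 x i) q * (W.tr (W.c1 (W.c2 x i) p) (W.c1 y j) *
            W.tr (W.c2 (W.c1 x i) q * W.tr (W.c2 (W.c2 x i) p) (W.c2 y j)) z) := fun j => by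
    simp only [map_sum, phi_tmul]
  have hphiR : ∀ j : ℕ, W.phi (W.c1 y j) (W.c2 y j) z
      (∑ i ∈ Finset.range (W.n x), ∑ p ∈ Finset.range (W.n (W.c2 x i)),
        ∑ s ∈ Finset.range (W.n (W.c2 (W.c2 x i) p)),
          W.c1 x i ⊗ₜ[R] (W.c1 (W.c2 x i) p ⊗ₜ[R]
            (W.c1 (W.c2 (W.c2 x i) p) s ⊗ₜ[R] W.c2 (W.c2 (W.c2 x i) p) s)))
      = ∑ i ∈ Finset.range (W.n x), ∑ p ∈ Finset.range (W.n (W.c2 x i)),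
          ∑ s ∈ Finset.range (W.n (W.c2 (W.c2 x i) p)),
          W.c1 x i * (W.tr (W.c1 (W.c2 x i) p) (W.c1 y j) *
            W.tr (W.c1 (W.c2 (W.c2 x i) p) s * W.tr (W.c2 (W.c2 (W.c2 x i) p) s) (W.c2 y j)) z)
      := fun j => by
    simp only [map_sum, phi_tmul]
  have hR : W.gl x (W.gl y z)
      = ∑ i ∈ Finset.range (W.n x), ∑ j ∈ Finset.range (W.n y),
          ∑ p ∈ Finset.range (W.n (W.c2 x i)),
          ∑ s ∈ Finset.range (W.n (W.c2 (W.c2 x i) p)),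
          W.c1 x i * (W.tr (W.c1 (W.c2 x i) p) (W.c1 y j) *
            W.tr (W.c1 (W.c2 (W.c2 x i) p) s * W.tr (W.c2 (W.c2 (W.c2 x i) p) s) (W.c2 y j)) z)
      := by
    simp only [gl]
    simp_rw [W.tr_sum_right, W.tr_mul, W.tr_tr, W.tr_sum_left, Finset.mul_sum]
  calc W.gl (W.gl x y) z
      = ∑ i ∈ Finset.range (W.n x), ∑ q ∈ Finset.range (W.n (W.c1 x i)),
          ∑ p ∈ Finset.range (W.n (W.c2 x i)), ∑ j ∈ Finset.range (W.n y),
          W.c1 (W.c1 x i) q * (W.tr (W.c1 (W.c2 x i) p) (W.c1 y j) *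
            W.tr (W.c2 (W.c1 x i) q * W.tr (W.c2 (W.c2 x i) p) (W.c2 y j)) z) := hL
    _ = ∑ j ∈ Finset.range (W.n y), ∑ i ∈ Finset.range (W.n x),
          ∑ q ∈ Finset.range (W.n (W.c1 x i)), ∑ p ∈ Finset.range (W.n (W.c2 x i)),
          W.c1 (W.c1 x i) q * (W.tr (W.c1 (W.c2 x i) p) (W.c1 y j) *
            W.tr (W.c2 (W.c1 x i) q * W.tr (W.c2 (W.c2 x i) p) (W.c2 y j)) z) := sum_comm3 _
    _ = ∑ j ∈ Finset.range (W.n y), W.phi (W.c1 y j) (W.c2 y j) z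
          (∑ i ∈ Finset.range (W.n x), ∑ q ∈ Finset.range (W.n (W.c1 x i)),
            ∑ p ∈ Finset.range (W.n (W.c2 x i)),
              W.c1 (W.c1 x i) q ⊗ₜ[R] (W.c1 (W.c2 x i) p ⊗ₜ[R]
                (W.c2 (W.c1 x i) q ⊗ₜ[R] W.c2 (W.c2 x i) p))) :=
        Finset.sum_congr rfl fun j _ => (hphiL j).symm
    _ = ∑ j ∈ Finset.range (W.n y), W.phi (W.c1 y j) (W.c2 y j) z
          (∑ i ∈ Finset.range (W.n x), ∑ p ∈ Finset.range (W.n (W.c2 x i)),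
            ∑ s ∈ Finset.range (W.n (W.c2 (W.c2 x i) p)),
              W.c1 x i ⊗ₜ[R] (W.c1 (W.c2 x i) p ⊗ₜ[R]
                (W.c1 (W.c2 (W.c2 x i) p) s ⊗ₜ[R] W.c2 (W.c2 (W.c2 x i) p) s))) :=
        Finset.sum_congr rfl fun j _ => by rw [W.key_tensor x]
    _ = ∑ j ∈ Finset.range (W.n y), ∑ i ∈ Finset.range (W.n x),
          ∑ p ∈ Finset.range (W.n (W.c2 x i)),
          ∑ s ∈ Finset.range (W.n (W.c2 (W.c2 x i) p)),
          W.c1 x i * (W.tr (W.c1 (W.c2 x i) p) (W.c1 y j) *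
            W.tr (W.c1 (W.c2 (W.c2 x i) p) s * W.tr (W.c2 (W.c2 (W.c2 x i) p) s) (W.c2 y j)) z)
        := Finset.sum_congr rfl fun j _ => hphiR j
    _ = ∑ i ∈ Finset.range (W.n x), ∑ j ∈ Finset.range (W.n y),
          ∑ p ∈ Finset.range (W.n (W.c2 x i)),
          ∑ s ∈ Finset.range (W.n (W.c2 (W.c2 x i) p)),
          W.c1 x i * (W.tr (W.c1 (W.c2 x i) p) (W.c1 y j) *
            W.tr (W.c1 (W.c2 (W.c2 x i) p) s * W.tr (W.c2 (W.c2 (W.c2 x i) p) s) (W.c2 y j)) z)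
        := Finset.sum_comm
    _ = W.gl x (W.gl y z) := hR.symm

end Assoc2
section Units

variable {k R H : Type*} [Field k] [CharZero k]
    [CommRing R] [Algebra k R] [Ring H] [HopfAlgebra R H]
    [Algebra k H] [IsScalarTower k R H]
    (W : WeakPostHopfAlgebroid k R H)

lemma gl_one_left (x : H) : W.gl 1 x = x := by
  rw [W.gl_eq_glmap, Bialgebra.comul_one, Algebra.TensorProduct.one_def, glmap_tmul,
    W.one_tr, one_mul]

lemma sum_counit_smul (x : H) :
    ∑ i ∈ Finset.range (W.n x),
      Coalgebra.counit (R := R) (W.c2 x i) • W.c1 x i = x := by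
  have h := LinearMap.congr_fun (Coalgebra.lTensor_counit_comp_comul (R := R) (A := H)) x
  simp only [LinearMap.comp_apply, LinearMap.flip_apply, TensorProduct.mk_apply] at h
  rw [W.repr x, map_sum] at h
  simp only [LinearMap.lTensor_tmul] at h
  have h2 := congrArg (TensorProduct.rid R H) h
  simp only [map_sum, TensorProduct.rid_tmul, one_smul] at h2
  exact h2

lemma gl_one_right (x : H) : W.gl x 1 = x := by
  simp only [gl, W.tr_one]
  calc ∑ i ∈ Finset.range (W.n x), W.c1 x i * algebraMap R H (Coalgebra.counit (W.c2 x i))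
      = ∑ i ∈ Finset.range (W.n x), Coalgebra.counit (R := R) (W.c2 x i) • W.c1 x i :=
        Finset.sum_congr rfl fun i _ => by
          rw [← Algebra.commutes (Coalgebra.counit (W.c2 x i)) (W.c1 x i), ← Algebra.smul_def]
    _ = x := W.sum_counit_smul x

lemma gl_algebraMap_left (f : R) (x : H) : W.gl (algebraMap R H f) x = f • x := by
  rw [W.gl_eq_glmap, Bialgebra.comul_algebraMap, Algebra.TensorProduct.algebraMap_apply,
    glmap_tmul, W.one_tr, ← Algebra.smul_def]

lemma gl_algebraMap (f g : R) :
    W.gl (algebraMap R H f) (algebraMap R H g) = algebraMap R H (f * g) := by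
  rw [W.gl_algebraMap_left, Algebra.smul_def, ← map_mul]

end Units
end WeakPostHopfAlgebroid
/-- the Grossman–Larson product is well defined (independent of the chosen
representation of the coproduct), associative with unit `1`, and `ι` is an algebra
homomorphism from `R` to `(H, *_▷)` with `ι(f) *_▷ x = f·x`. -/
theorem stmt3 {k R H : Type*} [Field k] [CharZero k]
    [CommRing R] [Algebra k R] [Ring H] [HopfAlgebra R H]
    [Algebra k H] [IsScalarTower k R H]
    (W : WeakPostHopfAlgebroid k R H) :
    (∀ (x y : H) (m : ℕ) (a b : ℕ → H),
        Coalgebra.comul (R := R) x = ∑ i ∈ Finset.range m, a i ⊗ₜ[R] b i →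
        ∑ i ∈ Finset.range m, a i * W.tr (b i) y = W.gl x y)
    ∧ (∀ x y z : H, W.gl (W.gl x y) z = W.gl x (W.gl y z))
    ∧ (∀ x : H, W.gl 1 x = x)
    ∧ (∀ x : H, W.gl x 1 = x)
    ∧ W.gl 1 1 = 1
    ∧ (∀ f g : R, W.gl (algebraMap R H f) (algebraMap R H g) = algebraMap R H (f * g))
    ∧ (∀ (f : R) (x : H), W.gl (algebraMap R H f) x = f • x) := by
  exact ⟨fun x y m a b h => WeakPostHopfAlgebroid.gl_welldef W x y m a b h, W.gl_assoc, W.gl_one_left,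
    W.gl_one_right, W.gl_one_left 1, W.gl_algebraMap, W.gl_algebraMap_left⟩
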